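/- Let q : ℝ^d × ℝ → ℝ be continuously differentiable and strictly positive, let f : ℝ^d × ℝ → ℝ^d be continuously differentiable, and suppose q satisfies the continuity equation ∂q/∂t(x,t) = −div_x(q(x,t)·f(x,t)) for all (x,t). If x : ℝ → ℝ^d is differentiable with x'(t) = f(x(t), t) for all t, then for every T ≥ 0, log q(x(T), T) = log q(x(0), 0) − ∫₀ᵀ (div_x f)(x(t), t) dt. -/

import Mathlib

/-- Divergence in the spatial variable of a time-dependent vector field on ℝ^d:
`div_x v (x, t) = Σᵢ ∂vᵢ/∂xᵢ (x, t)`. -/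
noncomputable def spatialDiv {d : ℕ} (v : (Fin d → ℝ) × ℝ → (Fin d → ℝ))
    (x : Fin d → ℝ) (t : ℝ) : ℝ :=
  ∑ i, fderiv ℝ (fun y : Fin d → ℝ => v (y, t) i) x (Pi.single i 1)

/-- If a strictly positive `C¹` density `q` satisfies the continuity equation
`∂q/∂t = −div_x (q f)` for a `C¹` velocity field `f`, and `x(·)` is a trajectory of the flow,
then for every `T ≥ 0`,
`log q(x(T), T) = log q(x(0), 0) − ∫₀ᵀ (div_x f)(x(t), t) dt`. -/
theorem log_density_integral_formula {d : ℕ}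
    (q : (Fin d → ℝ) × ℝ → ℝ) (f : (Fin d → ℝ) × ℝ → (Fin d → ℝ))
    (hq : ContDiff ℝ 1 q) (hqpos : ∀ p, 0 < q p)
    (hf : ContDiff ℝ 1 f)
    (hcont : ∀ (x : Fin d → ℝ) (t : ℝ),
      deriv (fun s => q (x, s)) t
        = -(spatialDiv (fun p => q p • f p) x t))
    (x : ℝ → (Fin d → ℝ)) (hx : ∀ t, HasDerivAt x (f (x t, t)) t) :
    ∀ T : ℝ, 0 ≤ T →
      Real.log (q (x T, T))
        = Real.log (q (x 0, 0)) - ∫ t in (0 : ℝ)..T, spatialDiv f (x t) t := by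
  have hqd : Differentiable ℝ q := hq.differentiable one_ne_zero
  have hfd : Differentiable ℝ f := hf.differentiable one_ne_zero
  -- spatial partial fderiv of q
  have hqx : ∀ (y : Fin d → ℝ) (t : ℝ),
      HasFDerivAt (fun z : Fin d → ℝ => q (z, t))
        ((fderiv ℝ q (y, t)).comp (ContinuousLinearMap.inl ℝ _ ℝ)) y :=
    fun y t => (hqd (y, t)).hasFDerivAt.comp y (hasFDerivAt_prodMk_left y t)
  -- time partial deriv of q
  have hqt : ∀ (y : Fin d → ℝ) (t : ℝ),
      HasDerivAt (fun s : ℝ => q (y, s)) (fderiv ℝ q (y, t) (0, 1)) t := by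
    intro y t
    have := ((hqd (y, t)).hasFDerivAt.comp t (hasFDerivAt_prodMk_right y t)).hasDerivAt
    simp at this; exact this
  -- components of f: spatial partial fderiv
  have hfx : ∀ (y : Fin d → ℝ) (t : ℝ) (i : Fin d),
      HasFDerivAt (fun z : Fin d → ℝ => f (z, t) i)
        (((ContinuousLinearMap.proj i).comp (fderiv ℝ f (y, t))).comp
          (ContinuousLinearMap.inl ℝ _ ℝ)) y := by
    intro y t i
    exact (((ContinuousLinearMap.proj (R := ℝ) (φ := fun _ : Fin d => ℝ) i).hasFDerivAt).comp
      (y, t) (hfd (y, t)).hasFDerivAt).comp y (hasFDerivAt_prodMk_left (𝕜 := ℝ) y t)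
  -- spatialDiv f expressed via fderiv of f
  have hdivf : ∀ (y : Fin d → ℝ) (t : ℝ),
      spatialDiv f y t = ∑ i, fderiv ℝ f (y, t) (Pi.single i 1, 0) i := by
    intro y t
    unfold spatialDiv
    refine Finset.sum_congr rfl fun i _ => ?_
    rw [(hfx y t i).fderiv]
    simp
  -- spatialDiv of q • f: product rule
  have hdivqf : ∀ (y : Fin d → ℝ) (t : ℝ),
      spatialDiv (fun p => q p • f p) y t
        = fderiv ℝ q (y, t) (f (y, t), 0) + q (y, t) * spatialDiv f y t := by
    intro y t
    rw [hdivf]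
    simp only [spatialDiv]
    have hstep : ∀ i : Fin d,
        fderiv ℝ (fun z : Fin d → ℝ => (q (z, t) • f (z, t)) i) y (Pi.single i 1)
          = q (y, t) * fderiv ℝ f (y, t) (Pi.single i 1, 0) i
            + f (y, t) i * fderiv ℝ q (y, t) (Pi.single i 1, 0) := by
      intro i
      have h1 : (fun z : Fin d → ℝ => (q (z, t) • f (z, t)) i)
          = fun z => q (z, t) * f (z, t) i := by
        funext z; simp
      rw [h1, fderiv_fun_mul ((hqx y t).differentiableAt) ((hfx y t i).differentiableAt),
        (hqx y t).fderiv, (hfx y t i).fderiv]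
      simp [mul_comm]
    rw [Finset.sum_congr rfl fun i _ => hstep i, Finset.sum_add_distrib, ← Finset.mul_sum]
    have hfsum : (f (y, t)) = ∑ i, f (y, t) i • (Pi.single i 1 : Fin d → ℝ) := by
      have h := pi_eq_sum_univ (f (y, t))
      convert h using 2 with i
      funext j
      simp [Pi.single_apply, eq_comm]
    have h2 : fderiv ℝ q (y, t) (f (y, t), 0)
        = ∑ i, f (y, t) i * fderiv ℝ q (y, t) (Pi.single i 1, 0) := by
      have hpair : ((f (y, t), 0) : (Fin d → ℝ) × ℝ)
          = ∑ i, f (y, t) i • ((Pi.single i 1 : Fin d → ℝ), (0 : ℝ)) := by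
        rw [Prod.ext_iff]
        constructor
        · simpa [Prod.fst_sum] using hfsum
        · simp [Prod.snd_sum]
      rw [hpair, map_sum]
      refine Finset.sum_congr rfl fun i _ => ?_
      rw [map_smul, smul_eq_mul]
    rw [h2]
    ring
  -- total derivative of t ↦ q (x t, t)
  have hQ : ∀ t, HasDerivAt (fun s => q (x s, s))
      (-(q (x t, t) * spatialDiv f (x t) t)) t := by
    intro t
    have h1 : HasDerivAt (fun s : ℝ => (x s, s)) (f (x t, t), 1) t :=
      (hx t).prodMk (hasDerivAt_id t)
    have h2 : HasDerivAt (fun s => q (x s, s)) (fderiv ℝ q (x t, t) (f (x t, t), 1)) t :=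
      HasFDerivAt.comp_hasDerivAt (f := fun s : ℝ => (x s, s)) t (hqd (x t, t)).hasFDerivAt h1
    have h3 : fderiv ℝ q (x t, t) (f (x t, t), 1)
        = -(q (x t, t) * spatialDiv f (x t) t) := by
      have hsplit : ((f (x t, t), 1) : (Fin d → ℝ) × ℝ)
          = (f (x t, t), 0) + (0, 1) := by simp
      have ht : fderiv ℝ q (x t, t) (0, 1)
          = -(spatialDiv (fun p => q p • f p) (x t) t) := by
        rw [← (hqt (x t) t).deriv]
        exact hcont (x t) t
      rw [hsplit, map_add, ht, hdivqf]
      ring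
    rw [h3] at h2
    exact h2
  -- derivative of log density
  have hL : ∀ t, HasDerivAt (fun s => Real.log (q (x s, s)))
      (-(spatialDiv f (x t) t)) t := by
    intro t
    have := (hQ t).log (ne_of_gt (hqpos (x t, t)))
    have hne : q (x t, t) ≠ 0 := ne_of_gt (hqpos (x t, t))
    have heq : -(q (x t, t) * spatialDiv f (x t) t) / q (x t, t)
        = -(spatialDiv f (x t) t) := by
      field_simp
    rwa [heq] at this
  -- continuity of the integrand
  have hxc : Continuous x := by
    rw [continuous_iff_continuousAt]
    exact fun t => (hx t).continuousAt
  have hic : Continuous fun t => spatialDiv f (x t) t := by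
    have h1 : Continuous fun t => fderiv ℝ f (x t, t) :=
      (hf.continuous_fderiv one_ne_zero).comp (hxc.prodMk continuous_id)
    have h2 : ∀ i : Fin d, Continuous fun t =>
        fderiv ℝ f (x t, t) (Pi.single i 1, 0) i :=
      fun i => (continuous_apply i).comp (h1.clm_apply continuous_const)
    have h3 : Continuous fun t => ∑ i, fderiv ℝ f (x t, t) (Pi.single i 1, 0) i :=
      continuous_finset_sum _ fun i _ => h2 i
    have h4 : (fun t => spatialDiv f (x t) t)
        = fun t => ∑ i, fderiv ℝ f (x t, t) (Pi.single i 1, 0) i := by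
      funext t; exact hdivf (x t) t
    rw [h4]; exact h3
  intro T hT
  have hint : IntervalIntegrable (fun t => -(spatialDiv f (x t) t))
      MeasureTheory.volume 0 T := (hic.neg).intervalIntegrable 0 T
  have := intervalIntegral.integral_eq_sub_of_hasDerivAt
    (f := fun s => Real.log (q (x s, s)))
    (f' := fun t => -(spatialDiv f (x t) t))
    (fun t _ => hL t) hint
  rw [intervalIntegral.integral_neg] at this
  linarith
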